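/- If Q₁ and Q₂ are countable thin quasi-orders, then the product R = Q₁ × Q₂, ordered coordinatewise by (p₁,p₂) ≤_R (q₁,q₂) iff p₁ ≤_{Q₁} q₁ and p₂ ≤_{Q₂} q₂, is thin. -/

import Mathlib

/-- The shift map on sequences. -/
def seqShift {Q : Type*} (X : ℕ → Q) : ℕ → Q := fun k => X (k + 1)

/-- The set `Q⃗` of sequences `X` with `¬ r (X k) (X (k+1))` for all `k`. -/
def vecSet {Q : Type*} (r : Q → Q → Prop) : Set (ℕ → Q) :=
  {X | ∀ k, ¬ r (X k) (X (k + 1))}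

/-- The shift graph on a subset `A` of `Qᴺ` (with `Q` discrete, `Qᴺ` carrying the product
Borel structure) admits a Borel proper 3-colouring. -/
def Colour3 {Q : Type*} (A : Set (ℕ → Q)) : Prop :=
  letI : MeasurableSpace Q := ⊤
  ∃ c : A → Fin 3, Measurable c ∧
    ∀ (X : ℕ → Q) (hX : X ∈ A) (hX' : seqShift X ∈ A),
      c ⟨X, hX⟩ ≠ c ⟨seqShift X, hX'⟩

/-- A relation `r` on `Q` is *thin* if the shift graph on `Q⃗ = vecSet r`
is Borel 3-colourable; otherwise it is *thick*. -/
def IsThin {Q : Type*} (r : Q → Q → Prop) : Prop := Colour3 (vecSet r)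

open scoped Fin.NatCast

section ThinAux

open Classical

variable {Q₁ Q₂ : Type*} (r₁ : Q₁ → Q₁ → Prop) (r₂ : Q₂ → Q₂ → Prop)

/-- Which coordinate fails at step `k`: `true` if `r₁` holds (hence coord 2 must fail),
`false` if `r₁` fails. -/
noncomputable def sigf (X : ℕ → Q₁ × Q₂) (k : ℕ) : Bool :=
  if r₁ (X k).1 (X (k + 1)).1 then true else false

/-- `sigf` is constant from `m` on. -/
def tailC (X : ℕ → Q₁ × Q₂) (m : ℕ) : Prop :=
  ∀ k, sigf r₁ X (m + k) = sigf r₁ X m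

def EvC (X : ℕ → Q₁ × Q₂) : Prop := ∃ m, tailC r₁ X m

noncomputable def mval (X : ℕ → Q₁ × Q₂) : ℕ := sInf {m | tailC r₁ X m}

noncomputable def fsw (X : ℕ → Q₁ × Q₂) : ℕ := sInf {k | sigf r₁ X k ≠ sigf r₁ X (k + 1)}

noncomputable def useC {Q : Type*} (r : Q → Q → Prop) (c : (vecSet r) → Fin 3)
    (Z : ℕ → Q) : Fin 3 :=
  if h : Z ∈ vecSet r then c ⟨Z, h⟩ else 0

noncomputable def gam (c₁ : (vecSet r₁) → Fin 3) (c₂ : (vecSet r₂) → Fin 3)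
    (X : ℕ → Q₁ × Q₂) : Fin 3 :=
  if sigf r₁ X (mval r₁ X) = true then useC r₂ c₂ (fun k => (X (mval r₁ X + k)).2)
  else useC r₁ c₁ (fun k => (X (mval r₁ X + k)).1)

noncomputable def col (c₁ : (vecSet r₁) → Fin 3) (c₂ : (vecSet r₂) → Fin 3)
    (X : ℕ → Q₁ × Q₂) : Fin 3 :=
  if EvC r₁ X then
    (if mval r₁ X = 0 then gam r₁ r₂ c₁ c₂ X
     else gam r₁ r₂ c₁ c₂ X + 1 + (((mval r₁ X - 1) % 2 : ℕ) : Fin 3))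
  else (if fsw r₁ X % 2 = 1 then 2 else (if sigf r₁ X 0 = true then 0 else 1))

variable {r₁ r₂}

lemma sigf_shift (X : ℕ → Q₁ × Q₂) (k : ℕ) :
    sigf r₁ (seqShift X) k = sigf r₁ X (k + 1) := rfl

lemma tailC_succ {X : ℕ → Q₁ × Q₂} {m : ℕ} (h : tailC r₁ X m) : tailC r₁ X (m + 1) := by
  intro k
  have h1 : sigf r₁ X (m + 1) = sigf r₁ X m := h 1
  have h2 : sigf r₁ X (m + (1 + k)) = sigf r₁ X m := h (1 + k)
  have e : m + (1 + k) = m + 1 + k := by omega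
  rw [e] at h2
  rw [h2, h1]

lemma tailC_shift {X : ℕ → Q₁ × Q₂} {m : ℕ} :
    tailC r₁ (seqShift X) m ↔ tailC r₁ X (m + 1) := by
  constructor
  · intro h k
    have := h k
    rw [sigf_shift, sigf_shift] at this
    have e : m + k + 1 = m + 1 + k := by omega
    rwa [e] at this
  · intro h k
    rw [sigf_shift, sigf_shift]
    have := h k
    have e : m + 1 + k = m + k + 1 := by omega
    rwa [e] at this

lemma evc_shift {X : ℕ → Q₁ × Q₂} : EvC r₁ (seqShift X) ↔ EvC r₁ X := by
  constructor
  · rintro ⟨m, hm⟩; exact ⟨m + 1, tailC_shift.mp hm⟩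
  · rintro ⟨m, hm⟩; exact ⟨m, tailC_shift.mpr (tailC_succ hm)⟩

lemma nat_sInf_eq {S : Set ℕ} {n : ℕ} (h : n ∈ S) (h' : ∀ m < n, m ∉ S) : sInf S = n := by
  have h1 : sInf S ≤ n := Nat.sInf_le h
  rcases Nat.lt_or_ge (sInf S) n with h2 | h2
  · exact absurd (Nat.sInf_mem ⟨n, h⟩) (h' _ h2)
  · omega

lemma mval_tailC {X : ℕ → Q₁ × Q₂} (h : EvC r₁ X) : tailC r₁ X (mval r₁ X) :=
  Nat.sInf_mem h

lemma mval_shift {X : ℕ → Q₁ × Q₂} (h : EvC r₁ X) :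
    mval r₁ (seqShift X) = mval r₁ X - 1 := by
  rcases Nat.eq_zero_or_pos (mval r₁ X) with h0 | hpos
  · rw [h0]
    have ht : tailC r₁ X 0 := by rw [← h0]; exact mval_tailC h
    exact nat_sInf_eq (tailC_shift.mpr (tailC_succ ht)) (by omega)
  · have hm : tailC r₁ X (mval r₁ X) := mval_tailC h
    have he : mval r₁ X - 1 + 1 = mval r₁ X := by omega
    refine nat_sInf_eq (tailC_shift.mpr (by rw [he]; exact hm)) ?_
    intro m hm' hmem
    have h2 : mval r₁ X ≤ m + 1 := Nat.sInf_le (tailC_shift.mp hmem)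
    omega

lemma sigf_false {X : ℕ → Q₁ × Q₂} {k : ℕ} (h : sigf r₁ X k = false) :
    ¬ r₁ (X k).1 (X (k + 1)).1 := by
  intro hr; simp [sigf, hr] at h

lemma sigf_true {X : ℕ → Q₁ × Q₂} {k : ℕ} (h : sigf r₁ X k = true) :
    r₁ (X k).1 (X (k + 1)).1 := by
  by_contra hr; simp [sigf, hr] at h

lemma tail1_mem {X : ℕ → Q₁ × Q₂}
    (hX : X ∈ vecSet (fun p q : Q₁ × Q₂ => r₁ p.1 q.1 ∧ r₂ p.2 q.2)) (m : ℕ)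
    (hs : ∀ k, sigf r₁ X (m + k) = false) :
    (fun k => (X (m + k)).1) ∈ vecSet r₁ := by
  intro k
  exact sigf_false (hs k)

lemma tail2_mem {X : ℕ → Q₁ × Q₂}
    (hX : X ∈ vecSet (fun p q : Q₁ × Q₂ => r₁ p.1 q.1 ∧ r₂ p.2 q.2)) (m : ℕ)
    (hs : ∀ k, sigf r₁ X (m + k) = true) :
    (fun k => (X (m + k)).2) ∈ vecSet r₂ := by
  intro k
  intro hr2
  exact hX (m + k) ⟨sigf_true (hs k), hr2⟩

end ThinAux

section Proper

variable {Q₁ Q₂ : Type*} {r₁ : Q₁ → Q₁ → Prop} {r₂ : Q₂ → Q₂ → Prop}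

lemma vecSet_shift {Q : Type*} {r : Q → Q → Prop} {Z : ℕ → Q} (h : Z ∈ vecSet r) :
    seqShift Z ∈ vecSet r := fun k => h (k + 1)

lemma switch_nonempty {X : ℕ → Q₁ × Q₂} (h : ¬ EvC r₁ X) :
    ∃ k, sigf r₁ X k ≠ sigf r₁ X (k + 1) := by
  by_contra h'
  push_neg at h'
  apply h
  refine ⟨0, fun k => ?_⟩
  induction k with
  | zero => rfl
  | succ k ih =>
    show sigf r₁ X (0 + k + 1) = sigf r₁ X 0
    rw [← h' (0 + k)]; exact ih

lemma gam_shift (c₁ : (vecSet r₁) → Fin 3) (c₂ : (vecSet r₂) → Fin 3)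
    {X : ℕ → Q₁ × Q₂} (h : EvC r₁ X) (hpos : 1 ≤ mval r₁ X) :
    gam r₁ r₂ c₁ c₂ (seqShift X) = gam r₁ r₂ c₁ c₂ X := by
  have hY : mval r₁ (seqShift X) = mval r₁ X - 1 := mval_shift h
  have hsig : sigf r₁ (seqShift X) (mval r₁ X - 1) = sigf r₁ X (mval r₁ X) := by
    rw [sigf_shift]; congr 1; omega
  have htail1 : (fun k => ((seqShift X) (mval r₁ X - 1 + k)).1)
      = fun k => (X (mval r₁ X + k)).1 := by
    funext k
    show (X (mval r₁ X - 1 + k + 1)).1 = _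
    congr 2
    omega
  have htail2 : (fun k => ((seqShift X) (mval r₁ X - 1 + k)).2)
      = fun k => (X (mval r₁ X + k)).2 := by
    funext k
    show (X (mval r₁ X - 1 + k + 1)).2 = _
    congr 2
    omega
  unfold gam
  rw [hY, hsig, htail1, htail2]

theorem col_proper (c₁ : (vecSet r₁) → Fin 3) (c₂ : (vecSet r₂) → Fin 3)
    (hp₁ : ∀ (Z : ℕ → Q₁) (hZ : Z ∈ vecSet r₁) (hZ' : seqShift Z ∈ vecSet r₁),
      c₁ ⟨Z, hZ⟩ ≠ c₁ ⟨seqShift Z, hZ'⟩)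
    (hp₂ : ∀ (Z : ℕ → Q₂) (hZ : Z ∈ vecSet r₂) (hZ' : seqShift Z ∈ vecSet r₂),
      c₂ ⟨Z, hZ⟩ ≠ c₂ ⟨seqShift Z, hZ'⟩)
    {X : ℕ → Q₁ × Q₂}
    (hX : X ∈ vecSet (fun p q : Q₁ × Q₂ => r₁ p.1 q.1 ∧ r₂ p.2 q.2)) :
    col r₁ r₂ c₁ c₂ X ≠ col r₁ r₂ c₁ c₂ (seqShift X) := by
  classical
  set Y := seqShift X with hYdef
  by_cases hE : EvC r₁ X
  · have hEY : EvC r₁ Y := evc_shift.mpr hE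
    rcases Nat.eq_zero_or_pos (mval r₁ X) with h0 | hpos
    · -- mval = 0 : both colours are `gam` values, use properness of c₁/c₂
      have hY0 : mval r₁ Y = 0 := by rw [mval_shift hE, h0]
      have hcolX : col r₁ r₂ c₁ c₂ X = gam r₁ r₂ c₁ c₂ X := by
        simp [col, hE, h0]
      have hcolY : col r₁ r₂ c₁ c₂ Y = gam r₁ r₂ c₁ c₂ Y := by
        simp [col, hEY, hY0]
      rw [hcolX, hcolY]
      have ht : tailC r₁ X 0 := by rw [← h0]; exact mval_tailC hE
      have hconst : ∀ k, sigf r₁ X k = sigf r₁ X 0 := by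
        intro k; have := ht k; rwa [Nat.zero_add] at this
      have hsig0 : sigf r₁ Y 0 = sigf r₁ X 0 := by
        rw [hYdef, sigf_shift]; exact hconst 1
      unfold gam
      rw [h0, hY0, hsig0]
      cases hb : sigf r₁ X 0 with
      | true =>
        rw [if_pos rfl, if_pos rfl]
        have hsall : ∀ k, sigf r₁ X (0 + k) = true := by
          intro k; rw [Nat.zero_add, hconst k, hb]
        have hZ : (fun k => (X (0 + k)).2) ∈ vecSet r₂ := tail2_mem hX 0 hsall
        have hZ' : seqShift (fun k => (X (0 + k)).2) ∈ vecSet r₂ := vecSet_shift hZ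
        rw [useC, dif_pos hZ, useC]
        rw [show (fun k => (Y (0 + k)).2) = seqShift (fun k => (X (0 + k)).2) from rfl]
        rw [dif_pos hZ']
        exact hp₂ _ hZ hZ'
      | false =>
        rw [if_neg (by simp), if_neg (by simp)]
        have hsall : ∀ k, sigf r₁ X (0 + k) = false := by
          intro k; rw [Nat.zero_add, hconst k, hb]
        have hZ : (fun k => (X (0 + k)).1) ∈ vecSet r₁ := tail1_mem hX 0 hsall
        have hZ' : seqShift (fun k => (X (0 + k)).1) ∈ vecSet r₁ := vecSet_shift hZ
        rw [useC, dif_pos hZ, useC]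
        rw [show (fun k => (Y (0 + k)).1) = seqShift (fun k => (X (0 + k)).1) from rfl]
        rw [dif_pos hZ']
        exact hp₁ _ hZ hZ'
    · -- mval ≥ 1
      have hYm : mval r₁ Y = mval r₁ X - 1 := mval_shift hE
      have hga : gam r₁ r₂ c₁ c₂ Y = gam r₁ r₂ c₁ c₂ X := gam_shift c₁ c₂ hE hpos
      have hne0 : mval r₁ X ≠ 0 := by omega
      have hcolX : col r₁ r₂ c₁ c₂ X
          = gam r₁ r₂ c₁ c₂ X + 1 + (((mval r₁ X - 1) % 2 : ℕ) : Fin 3) := by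
        simp [col, hE, hne0]
      by_cases h1 : mval r₁ X = 1
      · have hY0 : mval r₁ Y = 0 := by omega
        have hcolY : col r₁ r₂ c₁ c₂ Y = gam r₁ r₂ c₁ c₂ Y := by
          simp [col, hEY, hY0]
        rw [hcolX, hcolY, hga, h1]
        norm_num
      · have hm2 : 2 ≤ mval r₁ X := by omega
        have hY1 : mval r₁ Y ≠ 0 := by omega
        have hcolY : col r₁ r₂ c₁ c₂ Y
            = gam r₁ r₂ c₁ c₂ Y + 1 + (((mval r₁ Y - 1) % 2 : ℕ) : Fin 3) := by
          simp [col, hEY, hY1]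
        rw [hcolX, hcolY, hga]
        have hpar : (mval r₁ X - 1) % 2 ≠ (mval r₁ Y - 1) % 2 := by
          rw [hYm]; omega
        have hne01 : ∀ γ : Fin 3, γ + 1 + ((0 : ℕ) : Fin 3) ≠ γ + 1 + ((1 : ℕ) : Fin 3) := by
          decide
        rcases Nat.mod_two_eq_zero_or_one (mval r₁ X - 1) with ha | ha <;>
          rcases Nat.mod_two_eq_zero_or_one (mval r₁ Y - 1) with hb | hb <;>
          rw [ha, hb] <;> first
            | exact absurd (ha.trans hb.symm) hpar
            | exact hne01 _
            | exact (hne01 _).symm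
  · -- infinitely many switches
    have hEY : ¬ EvC r₁ Y := fun h' => hE (evc_shift.mp h')
    have hswX : ∃ k, sigf r₁ X k ≠ sigf r₁ X (k + 1) := switch_nonempty hE
    have hmemX : sigf r₁ X (fsw r₁ X) ≠ sigf r₁ X (fsw r₁ X + 1) := Nat.sInf_mem hswX
    cases h0 : fsw r₁ X with
    | zero =>
      have hcolX : col r₁ r₂ c₁ c₂ X = (if sigf r₁ X 0 = true then 0 else 1) := by
        simp [col, hE, h0]
      by_cases hYp : fsw r₁ Y % 2 = 1
      · have hcolY : col r₁ r₂ c₁ c₂ Y = 2 := by simp [col, hEY, hYp]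
        rw [hcolX, hcolY]
        cases hb : sigf r₁ X 0 <;> decide
      · have hcolY : col r₁ r₂ c₁ c₂ Y = (if sigf r₁ Y 0 = true then 0 else 1) := by
          simp [col, hEY, hYp]
        rw [hcolX, hcolY]
        have hsw : sigf r₁ Y 0 = sigf r₁ X 1 := rfl
        rw [h0] at hmemX
        rw [hsw]
        cases hb : sigf r₁ X 0 <;> cases hb' : sigf r₁ X 1 <;> simp_all
    | succ n =>
      have hfY : fsw r₁ Y = n := by
        apply nat_sInf_eq
        · show sigf r₁ Y n ≠ sigf r₁ Y (n + 1)
          rw [h0] at hmemX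
          exact hmemX
        · intro m hm hmem
          have hmem' : sigf r₁ X (m + 1) ≠ sigf r₁ X (m + 1 + 1) := hmem
          have hlt : m + 1 < fsw r₁ X := by omega
          exact Nat.notMem_of_lt_sInf hlt hmem'
      rcases Nat.mod_two_eq_zero_or_one (n + 1) with hp | hp
      · have hn : n % 2 = 1 := by omega
        have hcolX : col r₁ r₂ c₁ c₂ X = (if sigf r₁ X 0 = true then 0 else 1) := by
          simp [col, hE, h0, hp]
        have hcolY : col r₁ r₂ c₁ c₂ Y = 2 := by simp [col, hEY, hfY, hn]
        rw [hcolX, hcolY]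
        cases hb : sigf r₁ X 0 <;> decide
      · have hn : n % 2 = 0 := by omega
        have hcolX : col r₁ r₂ c₁ c₂ X = 2 := by simp [col, hE, h0, hp]
        have hcolY : col r₁ r₂ c₁ c₂ Y = (if sigf r₁ Y 0 = true then 0 else 1) := by
          simp [col, hEY, hfY, hn]
        rw [hcolX, hcolY]
        cases hb : sigf r₁ Y 0 <;> decide
end Proper

section Meas

open Classical

lemma measurable_nat_piece {α β : Type*} [MeasurableSpace α] [MeasurableSpace β]
    {f : α → β} (g : α → ℕ) (hg : ∀ n, MeasurableSet {a | g a = n})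
    (F : ℕ → α → β) (hF : ∀ n, Measurable (F n)) (hf : ∀ a, f a = F (g a) a) :
    Measurable f := by
  intro s hs
  have he : f ⁻¹' s = ⋃ n, ({a | g a = n} ∩ F n ⁻¹' s) := by
    ext a
    simp only [Set.mem_preimage, Set.mem_iUnion, Set.mem_inter_iff, Set.mem_setOf_eq, hf a]
    constructor
    · intro h; exact ⟨g a, rfl, h⟩
    · rintro ⟨n, hn, h⟩; rwa [hn]
  rw [he]
  exact MeasurableSet.iUnion fun n => (hg n).inter (hF n hs)

lemma measSet_coord {Q : Type*} [MeasurableSpace Q] [Countable Q]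
    (hQ : ∀ s : Set Q, MeasurableSet s) (p : Q → Q → Prop) (i j : ℕ) :
    MeasurableSet {X : ℕ → Q | p (X i) (X j)} := by
  have he : {X : ℕ → Q | p (X i) (X j)}
      = ⋃ a : Q, ((fun X : ℕ → Q => X i) ⁻¹' {a} ∩ (fun X : ℕ → Q => X j) ⁻¹' {b | p a b}) := by
    ext X
    simp only [Set.mem_setOf_eq, Set.mem_iUnion, Set.mem_inter_iff, Set.mem_preimage,
      Set.mem_singleton_iff]
    constructor
    · intro h; exact ⟨X i, rfl, h⟩
    · rintro ⟨a, ha, h⟩; rwa [ha]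
  rw [he]
  exact MeasurableSet.iUnion fun a =>
    ((measurable_pi_apply i) (hQ _)).inter ((measurable_pi_apply j) (hQ _))

lemma measSet_sInf_eq {α : Type*} [MeasurableSpace α] {T : ℕ → α → Prop}
    (hT : ∀ n, MeasurableSet {a | T n a}) (n : ℕ) :
    MeasurableSet {a | sInf {m | T m a} = n} := by
  cases n with
  | zero =>
    have he : {a | sInf {m | T m a} = 0} = {a | T 0 a} ∪ ⋂ m, {a | T m a}ᶜ := by
      ext a
      simp only [Set.mem_setOf_eq, Nat.sInf_eq_zero, Set.mem_union, Set.mem_iInter,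
        Set.mem_compl_iff, Set.eq_empty_iff_forall_notMem]
    rw [he]
    exact (hT 0).union (MeasurableSet.iInter fun m => (hT m).compl)
  | succ n =>
    have he : {a | sInf {m | T m a} = n + 1}
        = {a | T (n + 1) a} ∩ ⋂ m, ⋂ _ : m ≤ n, {a | T m a}ᶜ := by
      ext a
      simp only [Set.mem_setOf_eq, Set.mem_inter_iff, Set.mem_iInter, Set.mem_compl_iff]
      constructor
      · intro h
        have hne : {m | T m a}.Nonempty := by
          by_contra hb
          rw [Set.not_nonempty_iff_eq_empty] at hb
          rw [show sInf {m | T m a} = 0 from by rw [hb]; exact Nat.sInf_empty] at h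
          omega
        have h1 := Nat.sInf_mem hne
        rw [h] at h1
        refine ⟨h1, fun m hm => Nat.notMem_of_lt_sInf (s := {m | T m a}) (by rw [h]; omega)⟩
      · rintro ⟨h1, h2⟩
        exact nat_sInf_eq h1 (fun m hm => h2 m (by omega))
    rw [he]
    exact (hT (n + 1)).inter
      (MeasurableSet.iInter fun m => MeasurableSet.iInter fun _ => (hT m).compl)

end Meas

/-- The product of two countable thin quasi-orders, ordered coordinatewise, is thin. -/
theorem thin_product {Q₁ Q₂ : Type*} [Countable Q₁] [Countable Q₂]
    (r₁ : Q₁ → Q₁ → Prop) (r₂ : Q₂ → Q₂ → Prop)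
    (hr₁ : Reflexive r₁) (ht₁ : Transitive r₁)
    (hr₂ : Reflexive r₂) (ht₂ : Transitive r₂)
    (h₁ : IsThin r₁) (h₂ : IsThin r₂) :
    IsThin (fun p q : Q₁ × Q₂ => r₁ p.1 q.1 ∧ r₂ p.2 q.2) := by
  classical
  obtain ⟨c₁, hc₁m, hc₁⟩ := h₁
  obtain ⟨c₂, hc₂m, hc₂⟩ := h₂
  letI : MeasurableSpace Q₁ := ⊤
  letI : MeasurableSpace Q₂ := ⊤
  letI : MeasurableSpace (Q₁ × Q₂) := ⊤
  have hQ : ∀ s : Set (Q₁ × Q₂), MeasurableSet s := fun s => MeasurableSpace.measurableSet_top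
  have hQ1 : ∀ s : Set Q₁, MeasurableSet s := fun s => MeasurableSpace.measurableSet_top
  have hQ2 : ∀ s : Set Q₂, MeasurableSet s := fun s => MeasurableSpace.measurableSet_top
  -- measurability of the basic sets
  have hsig : ∀ (k : ℕ) (b : Bool), MeasurableSet {X : ℕ → Q₁ × Q₂ | sigf r₁ X k = b} := by
    intro k b
    exact measSet_coord hQ (fun u v => (if r₁ u.1 v.1 then true else false) = b) k (k + 1)
  have hsigeq : ∀ i j : ℕ, MeasurableSet {X : ℕ → Q₁ × Q₂ | sigf r₁ X i = sigf r₁ X j} := by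
    intro i j
    have he : {X : ℕ → Q₁ × Q₂ | sigf r₁ X i = sigf r₁ X j}
        = ⋃ b : Bool, ({X | sigf r₁ X i = b} ∩ {X | sigf r₁ X j = b}) := by
      ext X
      simp only [Set.mem_setOf_eq, Set.mem_iUnion, Set.mem_inter_iff]
      constructor
      · intro h; exact ⟨sigf r₁ X j, h, rfl⟩
      · rintro ⟨b, h1, h2⟩; rw [h1, h2]
    rw [he]
    exact MeasurableSet.iUnion fun b => (hsig i b).inter (hsig j b)
  have htailC : ∀ m : ℕ, MeasurableSet {X : ℕ → Q₁ × Q₂ | tailC r₁ X m} := by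
    intro m
    have he : {X : ℕ → Q₁ × Q₂ | tailC r₁ X m}
        = ⋂ k, {X | sigf r₁ X (m + k) = sigf r₁ X m} := by
      ext X; simp only [Set.mem_setOf_eq, Set.mem_iInter]; rfl
    rw [he]
    exact MeasurableSet.iInter fun k => hsigeq (m + k) m
  have hEvC : MeasurableSet {X : ℕ → Q₁ × Q₂ | EvC r₁ X} := by
    have he : {X : ℕ → Q₁ × Q₂ | EvC r₁ X} = ⋃ m, {X | tailC r₁ X m} := by
      ext X; simp only [Set.mem_setOf_eq, Set.mem_iUnion]; rfl
    rw [he]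
    exact MeasurableSet.iUnion htailC
  have hmval : ∀ n : ℕ, MeasurableSet {X : ℕ → Q₁ × Q₂ | mval r₁ X = n} :=
    fun n => measSet_sInf_eq (T := fun m X => tailC r₁ X m) htailC n
  have hfsw : ∀ n : ℕ, MeasurableSet {X : ℕ → Q₁ × Q₂ | fsw r₁ X = n} :=
    fun n => measSet_sInf_eq (T := fun k X => sigf r₁ X k ≠ sigf r₁ X (k + 1))
      (fun k => (hsigeq k (k + 1)).compl) n
  -- measurability of vecSet and useC
  have hvec1 : MeasurableSet (vecSet r₁) := by
    have he : vecSet r₁ = ⋂ k, {Z : ℕ → Q₁ | ¬ r₁ (Z k) (Z (k + 1))} := by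
      ext Z; simp only [vecSet, Set.mem_setOf_eq, Set.mem_iInter]
    rw [he]
    exact MeasurableSet.iInter fun k => measSet_coord hQ1 (fun u v => ¬ r₁ u v) k (k + 1)
  have hvec2 : MeasurableSet (vecSet r₂) := by
    have he : vecSet r₂ = ⋂ k, {Z : ℕ → Q₂ | ¬ r₂ (Z k) (Z (k + 1))} := by
      ext Z; simp only [vecSet, Set.mem_setOf_eq, Set.mem_iInter]
    rw [he]
    exact MeasurableSet.iInter fun k => measSet_coord hQ2 (fun u v => ¬ r₂ u v) k (k + 1)
  have huse1 : Measurable (useC r₁ c₁) :=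
    Measurable.dite hc₁m (measurable_const (a := (0 : Fin 3))) hvec1
  have huse2 : Measurable (useC r₂ c₂) :=
    Measurable.dite hc₂m (measurable_const (a := (0 : Fin 3))) hvec2
  -- tail coordinate maps
  have hfst : Measurable (Prod.fst : Q₁ × Q₂ → Q₁) := fun s _ => hQ _
  have hsnd : Measurable (Prod.snd : Q₁ × Q₂ → Q₂) := fun s _ => hQ _
  have htm1 : ∀ n : ℕ, Measurable (fun X : ℕ → Q₁ × Q₂ => (fun k => (X (n + k)).1)) := by
    intro n
    exact measurable_pi_lambda _ fun k => hfst.comp (measurable_pi_apply (n + k))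
  have htm2 : ∀ n : ℕ, Measurable (fun X : ℕ → Q₁ × Q₂ => (fun k => (X (n + k)).2)) := by
    intro n
    exact measurable_pi_lambda _ fun k => hsnd.comp (measurable_pi_apply (n + k))
  have hfin : ∀ (φ : Fin 3 → Fin 3), Measurable φ := fun φ s _ => trivial
  -- gam is measurable
  have hgam : Measurable (gam r₁ r₂ c₁ c₂) := by
    apply measurable_nat_piece (mval r₁) hmval
      (fun n X => if sigf r₁ X n = true then useC r₂ c₂ (fun k => (X (n + k)).2)
        else useC r₁ c₁ (fun k => (X (n + k)).1))
    · intro n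
      exact Measurable.ite (hsig n true) (huse2.comp (htm2 n)) (huse1.comp (htm1 n))
    · intro X; rfl
  -- col is measurable
  have hcol : Measurable (col r₁ r₂ c₁ c₂) := by
    apply Measurable.ite hEvC
    · apply measurable_nat_piece (mval r₁) hmval
        (fun n X => if n = 0 then gam r₁ r₂ c₁ c₂ X
          else gam r₁ r₂ c₁ c₂ X + 1 + (((n - 1) % 2 : ℕ) : Fin 3))
      · intro n
        by_cases hn : n = 0
        · simpa [hn] using hgam
        · simp only [hn, if_false]
          exact (hfin (fun t => t + 1 + (((n - 1) % 2 : ℕ) : Fin 3))).comp hgam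
      · intro X; rfl
    · apply measurable_nat_piece (fsw r₁) hfsw
        (fun n X => if n % 2 = 1 then 2 else (if sigf r₁ X 0 = true then 0 else 1))
      · intro n
        by_cases hn : n % 2 = 1
        · simp only [hn, if_true]; exact measurable_const
        · simp only [hn, if_false]
          exact Measurable.ite (hsig 0 true) measurable_const measurable_const
      · intro X; rfl
  refine ⟨fun x => col r₁ r₂ c₁ c₂ x.1, hcol.comp measurable_subtype_coe, ?_⟩
  intro X hX hX'
  exact col_proper c₁ c₂ hc₁ hc₂ hX
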